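/- arXiv:1207.6481 — 3 statements merged into one kernel-verified Lean document; each statement's English description precedes it below -/
import Mathlib

section
/- Define f_k ∈ ℚ[t,u] by the formal power series expansion log(1 + t·x + ((u+t²)/4)·x²) = ∑_{k≥1} f_k(t,u)·x^k. Then for every k ≥ 1, f_k = (1/(k·(-2)^{k-1})) · ∑_{q=0}^{⌊k/2⌋} (-1)^q · C(k, 2q) · t^{k-2q} · u^q. -/
noncomputable section

/-- The polynomial ring ℚ[t,u]. -/
abbrev Rtu : Type := MvPolynomial (Fin 2) ℚ

def t : Rtu := MvPolynomial.X 0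
def u : Rtu := MvPolynomial.X 1

/-- `log(1+v) = ∑_{m≥1} (-1)^{m+1} v^m / m` for `v` with zero constant term. -/
def logOne (v : PowerSeries Rtu) : PowerSeries Rtu :=
  PowerSeries.mk fun k => ∑ m ∈ Finset.range (k + 1),
    MvPolynomial.C ((-1 : ℚ) ^ (m + 1) / (m : ℚ)) * PowerSeries.coeff (R := Rtu) k (v ^ m)

/-- `(u + t²)/4`, the polynomial `s` after the change of variables `u = 4s - t²`. -/
def sPoly : Rtu := MvPolynomial.C ((4 : ℚ)⁻¹) * (u + t ^ 2)

namespace FkAux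

open Finset

/-- canonical sum shape -/
def Sig (w : ℕ → ℕ) (e N : ℕ) : Rtu :=
  ∑ q ∈ Finset.range N, (-1 : Rtu) ^ q * (w q : Rtu) * t ^ (e - 2 * q) * u ^ q

lemma Sig_ext (w : ℕ → ℕ) (e : ℕ) {N M : ℕ} (h : N ≤ M)
    (hv : ∀ q, N ≤ q → w q = 0) : Sig w e N = Sig w e M := by
  refine (Finset.sum_subset (Finset.range_subset_range.2 h) fun q _ hq => ?_)
  rw [hv q (by simpa using hq)]
  simp

lemma t_mul_Sig (w : ℕ → ℕ) (e N : ℕ) (hv : ∀ q, e < 2 * q → w q = 0) :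
    t * Sig w e N = Sig w (e + 1) N := by
  rw [Sig, Sig, Finset.mul_sum]
  refine Finset.sum_congr rfl fun q _ => ?_
  by_cases h : 2 * q ≤ e
  · rw [show e + 1 - 2 * q = (e - 2 * q) + 1 by omega]; ring
  · rw [hv q (by omega)]; simp

lemma t2_mul_Sig (w : ℕ → ℕ) (e N : ℕ) (hv : ∀ q, e < 2 * q → w q = 0) :
    t ^ 2 * Sig w e N = Sig w (e + 2) N := by
  rw [Sig, Sig, Finset.mul_sum]
  refine Finset.sum_congr rfl fun q _ => ?_
  by_cases h : 2 * q ≤ e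
  · rw [show e + 2 - 2 * q = (e - 2 * q) + 2 by omega]; ring
  · rw [hv q (by omega)]; simp

lemma u_mul_Sig (w : ℕ → ℕ) (e N : ℕ) :
    u * Sig w e N = (w 0 : Rtu) * t ^ (e + 2) - Sig (fun q => w (q - 1)) (e + 2) (N + 1) := by
  have key : Sig (fun q => w (q - 1)) (e + 2) (N + 1)
      = (∑ q ∈ Finset.range N,
          (-1 : Rtu) ^ (q + 1) * (w q : Rtu) * t ^ (e + 2 - 2 * (q + 1)) * u ^ (q + 1))
        + (w 0 : Rtu) * t ^ (e + 2) := by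
    rw [Sig, Finset.sum_range_succ']
    simp
  rw [key, Sig, Finset.mul_sum]
  rw [eq_sub_iff_add_eq, ← add_assoc, ← Finset.sum_add_distrib]
  have : ∀ q ∈ Finset.range N, u * ((-1 : Rtu) ^ q * (w q : Rtu) * t ^ (e - 2 * q) * u ^ q)
      + (-1 : Rtu) ^ (q + 1) * (w q : Rtu) * t ^ (e + 2 - 2 * (q + 1)) * u ^ (q + 1) = 0 := by
    intro q _
    rw [show e + 2 - 2 * (q + 1) = e - 2 * q by omega]
    ring
  rw [Finset.sum_congr rfl this]
  simp

lemma two_mul_Sig (w : ℕ → ℕ) (e N : ℕ) :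
    2 * Sig w e N = Sig (fun q => 2 * w q) e N := by
  rw [Sig, Sig, Finset.mul_sum]
  refine Finset.sum_congr rfl fun q _ => ?_
  push_cast; ring

def Pp (n : ℕ) : Rtu := Sig (fun q => (n + 1).choose (2 * q + 1)) n (n + 1)
def Qq (n : ℕ) : Rtu := Sig (fun q => n.choose (2 * q)) n (n + 1)

lemma P_rec (j : ℕ) : Pp (j + 2) = 2 * (t * Pp (j + 1)) - (u + t ^ 2) * Pp j := by
  rw [Pp, Pp, Pp]
  rw [t_mul_Sig _ _ _ (fun q h => Nat.choose_eq_zero_of_lt (by omega)), two_mul_Sig]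
  rw [add_mul, u_mul_Sig,
    t2_mul_Sig _ _ _ (fun q h => Nat.choose_eq_zero_of_lt (by omega))]
  rw [Sig_ext (fun q => 2 * (j + 2).choose (2 * q + 1)) (j + 1 + 1)
      (show j + 2 ≤ j + 3 by omega)
      (fun q h => by simp [Nat.choose_eq_zero_of_lt (show j + 2 < 2 * q + 1 by omega)]),
    Sig_ext (fun q => (j + 1).choose (2 * q + 1)) (j + 2)
      (show j + 1 ≤ j + 3 by omega)
      (fun q h => Nat.choose_eq_zero_of_lt (by omega)),
    Sig_ext (fun q => (j + 1).choose (2 * (q - 1) + 1)) (j + 2)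
      (show j + 1 + 1 ≤ j + 3 by omega)
      (fun q h => Nat.choose_eq_zero_of_lt (by omega))]
  have main : Sig (fun q => (j + 2 + 1).choose (2 * q + 1)) (j + 2) (j + 3)
      + Sig (fun q => (j + 1).choose (2 * q + 1)) (j + 2) (j + 3)
      + ((j + 1).choose (2 * 0 + 1) : Rtu) * t ^ (j + 2)
      = Sig (fun q => 2 * (j + 2).choose (2 * q + 1)) (j + 2) (j + 3)
      + Sig (fun q => (j + 1).choose (2 * (q - 1) + 1)) (j + 2) (j + 3) := by
    rw [Sig, Sig, Sig, Sig, ← Finset.sum_add_distrib, ← Finset.sum_add_distrib]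
    rw [Finset.sum_range_succ', Finset.sum_range_succ'
      (f := fun q => (-1 : Rtu) ^ q * ((2 * (j + 2).choose (2 * q + 1) : ℕ) : Rtu)
        * t ^ (j + 2 - 2 * q) * u ^ q
        + (-1 : Rtu) ^ q * (((j + 1).choose (2 * (q - 1) + 1) : ℕ) : Rtu)
        * t ^ (j + 2 - 2 * q) * u ^ q)]
    have h1 : ∀ q ∈ Finset.range (j + 2),
        ((-1 : Rtu) ^ (q + 1) * (((j + 2 + 1).choose (2 * (q + 1) + 1) : ℕ) : Rtu)
          * t ^ (j + 2 - 2 * (q + 1)) * u ^ (q + 1)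
        + (-1 : Rtu) ^ (q + 1) * (((j + 1).choose (2 * (q + 1) + 1) : ℕ) : Rtu)
          * t ^ (j + 2 - 2 * (q + 1)) * u ^ (q + 1))
        = ((-1 : Rtu) ^ (q + 1) * ((2 * (j + 2).choose (2 * (q + 1) + 1) : ℕ) : Rtu)
          * t ^ (j + 2 - 2 * (q + 1)) * u ^ (q + 1)
        + (-1 : Rtu) ^ (q + 1) * (((j + 1).choose (2 * (q + 1 - 1) + 1) : ℕ) : Rtu)
          * t ^ (j + 2 - 2 * (q + 1)) * u ^ (q + 1)) := by
      intro q _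
      have hc : (j + 2 + 1).choose (2 * (q + 1) + 1) + (j + 1).choose (2 * (q + 1) + 1)
          = 2 * (j + 2).choose (2 * (q + 1) + 1) + (j + 1).choose (2 * (q + 1 - 1) + 1) := by
        have e1 : (j + 3).choose (2 * q + 3)
            = (j + 2).choose (2 * q + 2) + (j + 2).choose (2 * q + 3) :=
          Nat.choose_succ_succ (j + 2) (2 * q + 2)
        have e2 : (j + 2).choose (2 * q + 2)
            = (j + 1).choose (2 * q + 1) + (j + 1).choose (2 * q + 2) :=
          Nat.choose_succ_succ (j + 1) (2 * q + 1)
        have e3 : (j + 2).choose (2 * q + 3)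
            = (j + 1).choose (2 * q + 2) + (j + 1).choose (2 * q + 3) :=
          Nat.choose_succ_succ (j + 1) (2 * q + 2)
        have g0 : j + 2 + 1 = j + 3 := by ring
        have g1 : 2 * (q + 1) + 1 = 2 * q + 3 := by ring
        have g2 : 2 * (q + 1 - 1) + 1 = 2 * q + 1 := by omega
        rw [g0, g1, g2]
        omega
      have hc' : (((j + 2 + 1).choose (2 * (q + 1) + 1) : ℕ) : Rtu)
          + (((j + 1).choose (2 * (q + 1) + 1) : ℕ) : Rtu)
          = ((2 * (j + 2).choose (2 * (q + 1) + 1) : ℕ) : Rtu)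
          + (((j + 1).choose (2 * (q + 1 - 1) + 1) : ℕ) : Rtu) := by
        exact_mod_cast congrArg (Nat.cast : ℕ → Rtu) hc
      linear_combination ((-1 : Rtu) ^ (q + 1) * t ^ (j + 2 - 2 * (q + 1)) * u ^ (q + 1)) * hc'
    rw [Finset.sum_congr rfl h1]
    have hch : ∀ n : ℕ, n.choose 1 = n := fun n => Nat.choose_one_right n
    simp only [Nat.mul_zero, Nat.zero_sub, Nat.sub_zero, pow_zero, one_mul, mul_one,
      Nat.choose_zero_right, hch]
    push_cast
    ring
  linear_combination main
lemma Q_id (j : ℕ) : Qq (j + 2) = t * Pp (j + 1) - (u + t ^ 2) * Pp j := by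
  rw [Qq, Pp, Pp]
  rw [t_mul_Sig _ _ _ (fun q h => Nat.choose_eq_zero_of_lt (by omega))]
  rw [add_mul, u_mul_Sig,
    t2_mul_Sig _ _ _ (fun q h => Nat.choose_eq_zero_of_lt (by omega))]
  rw [Sig_ext (fun q => (j + 2).choose (2 * q + 1)) (j + 1 + 1)
      (show j + 2 ≤ j + 3 by omega)
      (fun q h => Nat.choose_eq_zero_of_lt (by omega)),
    Sig_ext (fun q => (j + 1).choose (2 * q + 1)) (j + 2)
      (show j + 1 ≤ j + 3 by omega)
      (fun q h => Nat.choose_eq_zero_of_lt (by omega)),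
    Sig_ext (fun q => (j + 1).choose (2 * (q - 1) + 1)) (j + 2)
      (show j + 1 + 1 ≤ j + 3 by omega)
      (fun q h => Nat.choose_eq_zero_of_lt (by omega))]
  have main : Sig (fun q => (j + 2).choose (2 * q)) (j + 2) (j + 3)
      + Sig (fun q => (j + 1).choose (2 * q + 1)) (j + 2) (j + 3)
      + ((j + 1).choose (2 * 0 + 1) : Rtu) * t ^ (j + 2)
      = Sig (fun q => (j + 2).choose (2 * q + 1)) (j + 2) (j + 3)
      + Sig (fun q => (j + 1).choose (2 * (q - 1) + 1)) (j + 2) (j + 3) := by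
    rw [Sig, Sig, Sig, Sig, ← Finset.sum_add_distrib, ← Finset.sum_add_distrib]
    rw [Finset.sum_range_succ', Finset.sum_range_succ'
      (f := fun q => (-1 : Rtu) ^ q * (((j + 2).choose (2 * q + 1) : ℕ) : Rtu)
        * t ^ (j + 2 - 2 * q) * u ^ q
        + (-1 : Rtu) ^ q * (((j + 1).choose (2 * (q - 1) + 1) : ℕ) : Rtu)
        * t ^ (j + 2 - 2 * q) * u ^ q)]
    have h1 : ∀ q ∈ Finset.range (j + 2),
        ((-1 : Rtu) ^ (q + 1) * (((j + 2).choose (2 * (q + 1)) : ℕ) : Rtu)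
          * t ^ (j + 2 - 2 * (q + 1)) * u ^ (q + 1)
        + (-1 : Rtu) ^ (q + 1) * (((j + 1).choose (2 * (q + 1) + 1) : ℕ) : Rtu)
          * t ^ (j + 2 - 2 * (q + 1)) * u ^ (q + 1))
        = ((-1 : Rtu) ^ (q + 1) * (((j + 2).choose (2 * (q + 1) + 1) : ℕ) : Rtu)
          * t ^ (j + 2 - 2 * (q + 1)) * u ^ (q + 1)
        + (-1 : Rtu) ^ (q + 1) * (((j + 1).choose (2 * (q + 1 - 1) + 1) : ℕ) : Rtu)
          * t ^ (j + 2 - 2 * (q + 1)) * u ^ (q + 1)) := by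
      intro q _
      have hc : (j + 2).choose (2 * (q + 1)) + (j + 1).choose (2 * (q + 1) + 1)
          = (j + 2).choose (2 * (q + 1) + 1) + (j + 1).choose (2 * (q + 1 - 1) + 1) := by
        have e2 : (j + 2).choose (2 * q + 2)
            = (j + 1).choose (2 * q + 1) + (j + 1).choose (2 * q + 2) :=
          Nat.choose_succ_succ (j + 1) (2 * q + 1)
        have e3 : (j + 2).choose (2 * q + 3)
            = (j + 1).choose (2 * q + 2) + (j + 1).choose (2 * q + 3) :=
          Nat.choose_succ_succ (j + 1) (2 * q + 2)
        have g1 : 2 * (q + 1) + 1 = 2 * q + 3 := by ring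
        have g1' : 2 * (q + 1) = 2 * q + 2 := by ring
        have g2 : 2 * (q + 1 - 1) + 1 = 2 * q + 1 := by omega
        rw [g1, g1', g2]
        omega
      have hc' : (((j + 2).choose (2 * (q + 1)) : ℕ) : Rtu)
          + (((j + 1).choose (2 * (q + 1) + 1) : ℕ) : Rtu)
          = (((j + 2).choose (2 * (q + 1) + 1) : ℕ) : Rtu)
          + (((j + 1).choose (2 * (q + 1 - 1) + 1) : ℕ) : Rtu) := by
        exact_mod_cast congrArg (Nat.cast : ℕ → Rtu) hc
      linear_combination ((-1 : Rtu) ^ (q + 1) * t ^ (j + 2 - 2 * (q + 1)) * u ^ (q + 1)) * hc'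
    rw [Finset.sum_congr rfl h1]
    have hch : ∀ n : ℕ, n.choose 1 = n := fun n => Nat.choose_one_right n
    simp only [Nat.mul_zero, Nat.zero_sub, Nat.sub_zero, pow_zero, one_mul, mul_one,
      Nat.choose_zero_right, hch]
    push_cast
    ring
  linear_combination main
open PowerSeries

def vv : PowerSeries Rtu :=
  PowerSeries.C (R := Rtu) t * PowerSeries.X + PowerSeries.C (R := Rtu) sPoly * PowerSeries.X ^ 2

lemma coeff_vv_pow_zero {k m : ℕ} (h : k < m) :
    PowerSeries.coeff (R := Rtu) k (vv ^ m) = 0 := by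
  have hv : vv = X * (PowerSeries.C (R := Rtu) t + PowerSeries.C (R := Rtu) sPoly * X) := by
    rw [vv]; ring
  rw [hv, mul_pow, PowerSeries.coeff_X_pow_mul', if_neg (by omega)]

lemma coeff_vv_mul (i : ℕ) (ψ : PowerSeries Rtu) :
    PowerSeries.coeff (R := Rtu) (i + 2) (vv * ψ)
      = t * PowerSeries.coeff (R := Rtu) (i + 1) ψ + sPoly * PowerSeries.coeff (R := Rtu) i ψ := by
  rw [vv, add_mul, map_add, mul_assoc, mul_assoc, PowerSeries.coeff_C_mul,
    PowerSeries.coeff_C_mul]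
  rw [show (X : PowerSeries Rtu) * ψ = ψ * X from mul_comm _ _,
    show (X : PowerSeries Rtu) ^ 2 * ψ = ψ * X ^ 2 from mul_comm _ _]
  rw [PowerSeries.coeff_succ_mul_X, PowerSeries.coeff_mul_X_pow]
def SS (j : ℕ) : Rtu :=
  ∑ m ∈ Finset.range (j + 1), (-1 : Rtu) ^ m * PowerSeries.coeff (R := Rtu) j (vv ^ m)

lemma SS_zero : SS 0 = 1 := by
  rw [SS]
  simp

lemma SS_one : SS 1 = -t := by
  rw [SS]
  rw [Finset.sum_range_succ, Finset.sum_range_succ, Finset.sum_range_zero]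
  simp [vv, PowerSeries.coeff_X, pow_two, PowerSeries.coeff_C_mul]

lemma SS_rec (j : ℕ) : SS (j + 2) = -(t * SS (j + 1)) - sPoly * SS j := by
  rw [SS]
  rw [Finset.sum_range_succ']
  have h1 : ∀ m ∈ Finset.range (j + 2),
      (-1 : Rtu) ^ (m + 1) * PowerSeries.coeff (R := Rtu) (j + 2) (vv ^ (m + 1))
      = -((-1 : Rtu) ^ m * (t * PowerSeries.coeff (R := Rtu) (j + 1) (vv ^ m)))
        + -((-1 : Rtu) ^ m * (sPoly * PowerSeries.coeff (R := Rtu) j (vv ^ m))) := by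
    intro m _
    rw [pow_succ' vv m, coeff_vv_mul]
    ring
  rw [Finset.sum_congr rfl h1, Finset.sum_add_distrib]
  have h2 : (∑ x ∈ Finset.range (j + 2),
      -((-1 : Rtu) ^ x * (t * PowerSeries.coeff (R := Rtu) (j + 1) (vv ^ x))))
      = -(t * SS (j + 1)) := by
    rw [SS, Finset.mul_sum, ← Finset.sum_neg_distrib]
    exact Finset.sum_congr rfl fun x _ => by ring
  have h3 : (∑ x ∈ Finset.range (j + 2),
      -((-1 : Rtu) ^ x * (sPoly * PowerSeries.coeff (R := Rtu) j (vv ^ x))))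
      = -(sPoly * SS j) := by
    rw [SS, Finset.mul_sum, ← Finset.sum_neg_distrib, Finset.sum_range_succ,
      coeff_vv_pow_zero (by omega)]
    simp only [mul_zero, neg_zero, add_zero]
    exact Finset.sum_congr rfl fun x _ => by ring
  rw [h2, h3]
  simp [PowerSeries.coeff_one]
  ring
lemma dvv : d⁄dX Rtu vv
    = PowerSeries.C (R := Rtu) t + PowerSeries.C (R := Rtu) (2 * sPoly) * PowerSeries.X := by
  rw [vv, map_add]
  rw [Derivation.leibniz, Derivation.leibniz, Derivation.leibniz_pow]
  simp only [PowerSeries.derivative_X, PowerSeries.derivative_C, smul_eq_mul, map_mul,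
    map_ofNat]
  ring

lemma coeff_d_vv_pow (n i : ℕ) :
    PowerSeries.coeff (R := Rtu) (i + 2) (vv ^ (n + 1)) * ((i + 2 : ℕ) : Rtu)
      = ((n + 1 : ℕ) : Rtu) * (t * PowerSeries.coeff (R := Rtu) (i + 1) (vv ^ n)
          + 2 * sPoly * PowerSeries.coeff (R := Rtu) i (vv ^ n)) := by
  have h1 := PowerSeries.coeff_derivative (vv ^ (n + 1)) (i + 1)
  have h2 : d⁄dX Rtu (vv ^ (n + 1)) = (n + 1) • vv ^ n • d⁄dX Rtu vv := by
    simpa using Derivation.leibniz_pow (D := d⁄dX Rtu) (a := vv) (n + 1)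
  rw [h2, dvv] at h1
  have h3 : PowerSeries.coeff (R := Rtu) (i + 2) (vv ^ (n + 1)) * ((i + 2 : ℕ) : Rtu)
      = PowerSeries.coeff (R := Rtu) (i + 1)
        ((n + 1) • vv ^ n • (PowerSeries.C (R := Rtu) t + PowerSeries.C (R := Rtu) (2 * sPoly) * PowerSeries.X)) := by
    rw [h1]; push_cast; ring
  rw [h3, map_nsmul, nsmul_eq_mul, smul_eq_mul]
  rw [mul_add (vv ^ n), map_add]
  rw [show vv ^ n * (PowerSeries.C (R := Rtu) (2 * sPoly) * PowerSeries.X)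
      = PowerSeries.C (R := Rtu) (2 * sPoly) * (vv ^ n * PowerSeries.X) from by ring]
  rw [PowerSeries.coeff_C_mul, PowerSeries.coeff_succ_mul_X, PowerSeries.coeff_mul_C]
  push_cast
  ring
lemma kf (i : ℕ) :
    ((i + 2 : ℕ) : Rtu) * PowerSeries.coeff (R := Rtu) (i + 2) (logOne vv)
      = t * SS (i + 1) + 2 * sPoly * SS i := by
  rw [logOne, PowerSeries.coeff_mk, Finset.mul_sum, Finset.sum_range_succ']
  have h1 : ∀ m ∈ Finset.range (i + 2),
      ((i + 2 : ℕ) : Rtu) * (MvPolynomial.C ((-1 : ℚ) ^ (m + 1 + 1) / ((m + 1 : ℕ) : ℚ))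
        * PowerSeries.coeff (R := Rtu) (i + 2) (vv ^ (m + 1)))
      = (-1 : Rtu) ^ m * (t * PowerSeries.coeff (R := Rtu) (i + 1) (vv ^ m))
        + (-1 : Rtu) ^ m * (2 * sPoly * PowerSeries.coeff (R := Rtu) i (vv ^ m)) := by
    intro m _
    have hd := coeff_d_vv_pow m i
    have hC : MvPolynomial.C ((-1 : ℚ) ^ (m + 1 + 1) / ((m + 1 : ℕ) : ℚ)) * ((m + 1 : ℕ) : Rtu)
        = (-1 : Rtu) ^ m := by
      rw [show ((m + 1 : ℕ) : Rtu) = MvPolynomial.C (((m + 1 : ℕ) : ℚ))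
        from (map_natCast (MvPolynomial.C : ℚ →+* Rtu) (m + 1)).symm]
      rw [← map_mul, div_mul_cancel₀ _ (show ((m + 1 : ℕ) : ℚ) ≠ 0 by positivity)]
      rw [show (-1 : ℚ) ^ (m + 1 + 1) = (-1 : ℚ) ^ m by rw [pow_succ, pow_succ]; ring]
      rw [map_pow, map_neg, map_one]
    calc ((i + 2 : ℕ) : Rtu) * (MvPolynomial.C ((-1 : ℚ) ^ (m + 1 + 1) / ((m + 1 : ℕ) : ℚ))
          * PowerSeries.coeff (R := Rtu) (i + 2) (vv ^ (m + 1)))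
        = MvPolynomial.C ((-1 : ℚ) ^ (m + 1 + 1) / ((m + 1 : ℕ) : ℚ))
          * (PowerSeries.coeff (R := Rtu) (i + 2) (vv ^ (m + 1)) * ((i + 2 : ℕ) : Rtu)) := by ring
      _ = MvPolynomial.C ((-1 : ℚ) ^ (m + 1 + 1) / ((m + 1 : ℕ) : ℚ))
          * (((m + 1 : ℕ) : Rtu) * (t * PowerSeries.coeff (R := Rtu) (i + 1) (vv ^ m)
            + 2 * sPoly * PowerSeries.coeff (R := Rtu) i (vv ^ m))) := by rw [hd]
      _ = (MvPolynomial.C ((-1 : ℚ) ^ (m + 1 + 1) / ((m + 1 : ℕ) : ℚ)) * ((m + 1 : ℕ) : Rtu))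
          * (t * PowerSeries.coeff (R := Rtu) (i + 1) (vv ^ m)
            + 2 * sPoly * PowerSeries.coeff (R := Rtu) i (vv ^ m)) := by ring
      _ = _ := by rw [hC]; ring
  rw [Finset.sum_congr rfl h1, Finset.sum_add_distrib]
  have h2 : (∑ x ∈ Finset.range (i + 2),
      (-1 : Rtu) ^ x * (t * PowerSeries.coeff (R := Rtu) (i + 1) (vv ^ x))) = t * SS (i + 1) := by
    rw [SS, Finset.mul_sum]
    exact Finset.sum_congr rfl fun x _ => by ring
  have h3 : (∑ x ∈ Finset.range (i + 2),
      (-1 : Rtu) ^ x * (2 * sPoly * PowerSeries.coeff (R := Rtu) i (vv ^ x)))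
      = 2 * sPoly * SS i := by
    rw [SS, Finset.mul_sum, Finset.sum_range_succ, coeff_vv_pow_zero (by omega)]
    simp only [mul_zero, add_zero]
    exact Finset.sum_congr rfl fun x _ => by ring
  rw [h2, h3]
  simp [PowerSeries.coeff_one]

lemma hc2 : (2 : Rtu) * MvPolynomial.C ((-2 : ℚ))⁻¹ = -1 := by
  rw [show (2 : Rtu) = MvPolynomial.C (2 : ℚ) from (map_ofNat _ 2).symm, ← map_mul]
  norm_num

lemma hcs : (MvPolynomial.C ((-2 : ℚ))⁻¹) ^ 2 * (u + t ^ 2) = sPoly := by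
  rw [sPoly, ← map_pow]
  norm_num

lemma SS_closed (j : ℕ) :
    SS j = (MvPolynomial.C ((-2 : ℚ))⁻¹) ^ j * Pp j := by
  induction j using Nat.twoStepInduction with
  | zero =>
    rw [SS_zero, Pp, Sig]
    simp
  | one =>
    rw [SS_one, Pp, Sig]
    rw [Finset.sum_range_succ, Finset.sum_range_one]
    rw [show (2 : ℕ).choose (2 * 0 + 1) = 2 from rfl, show (2 : ℕ).choose (2 * 1 + 1) = 0 from rfl]
    push_cast
    simp only [pow_zero, pow_one, Nat.mul_zero, Nat.sub_zero, mul_zero, zero_mul, mul_one,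
      one_mul, add_zero]
    linear_combination (-t : Rtu) * hc2
  | more j ih1 ih2 =>
    rw [SS_rec, ih1, ih2, P_rec]
    linear_combination (-(t * Pp (j + 1) * (MvPolynomial.C ((-2 : ℚ))⁻¹) ^ (j + 1))) * hc2
      + (Pp j * (MvPolynomial.C ((-2 : ℚ))⁻¹) ^ j) * hcs
lemma coeff_logOne_one : PowerSeries.coeff (R := Rtu) 1 (logOne vv) = t := by
  rw [logOne, PowerSeries.coeff_mk]
  rw [Finset.sum_range_succ, Finset.sum_range_one]
  rw [pow_zero, pow_one]
  simp [vv, PowerSeries.coeff_one, PowerSeries.coeff_X, PowerSeries.coeff_X_pow,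
    PowerSeries.coeff_C_mul]

end FkAux

open FkAux in
theorem fk_tu_explicit' (k : ℕ) (hk : 1 ≤ k) :
    PowerSeries.coeff (R := Rtu) k (logOne vv)
      = MvPolynomial.C (1 / ((k : ℚ) * (-2 : ℚ) ^ (k - 1))) *
          ∑ q ∈ Finset.range (k / 2 + 1),
            (-1 : Rtu) ^ q * (k.choose (2 * q) : Rtu) * t ^ (k - 2 * q) * u ^ q := by
  match k, hk with
  | 1, _ =>
    rw [coeff_logOne_one]
    norm_num
  | (i + 2), _ =>
    have hkf := kf i
    have hsum : (∑ q ∈ Finset.range ((i + 2) / 2 + 1),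
        (-1 : Rtu) ^ q * ((i + 2).choose (2 * q) : Rtu) * t ^ (i + 2 - 2 * q) * u ^ q)
        = Qq (i + 2) := by
      rw [Qq]
      exact Sig_ext _ _ (by omega) (fun q h => Nat.choose_eq_zero_of_lt (by omega))
    rw [show i + 2 - 1 = i + 1 from rfl, hsum]
    have hk0 : ((i + 2 : ℕ) : Rtu) ≠ 0 := Nat.cast_ne_zero.mpr (by omega)
    apply mul_left_cancel₀ hk0
    rw [hkf, SS_closed, SS_closed, Q_id]
    have hconst : ((i + 2 : ℕ) : Rtu)
        * MvPolynomial.C (1 / (((i + 2 : ℕ)) * (-2 : ℚ) ^ (i + 1)))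
        = (MvPolynomial.C ((-2 : ℚ))⁻¹) ^ (i + 1) := by
      rw [show ((i + 2 : ℕ) : Rtu) = MvPolynomial.C (((i + 2 : ℕ) : ℚ))
        from (map_natCast (MvPolynomial.C : ℚ →+* Rtu) (i + 2)).symm]
      rw [← map_mul, ← map_pow]
      congr 1
      have h1 : ((i + 2 : ℕ) : ℚ) ≠ 0 := by positivity
      have h2 : ((-2 : ℚ)) ^ (i + 1) ≠ 0 := by positivity
      field_simp
      rw [← mul_pow]; norm_num
    calc t * ((MvPolynomial.C ((-2 : ℚ))⁻¹) ^ (i + 1) * Pp (i + 1))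
          + 2 * sPoly * ((MvPolynomial.C ((-2 : ℚ))⁻¹) ^ i * Pp i)
        = (MvPolynomial.C ((-2 : ℚ))⁻¹) ^ (i + 1) * (t * Pp (i + 1) - (u + t ^ 2) * Pp i) := by
          linear_combination ((u + t ^ 2) * Pp i * (MvPolynomial.C ((-2 : ℚ))⁻¹) ^ i
              * MvPolynomial.C ((-2 : ℚ))⁻¹) * hc2
            - (2 * Pp i * (MvPolynomial.C ((-2 : ℚ))⁻¹) ^ i) * hcs
      _ = ((i + 2 : ℕ) : Rtu) * (MvPolynomial.C (1 / (((i + 2 : ℕ)) * (-2 : ℚ) ^ (i + 1)))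
            * (t * Pp (i + 1) - (u + t ^ 2) * Pp i)) := by
          rw [← mul_assoc, hconst]


/-- The Fu polynomials in the variables `t, u`: with
`log(1 + t·x + ((u+t²)/4)·x²) = ∑_{k≥1} f_k x^k`, for `k ≥ 1` one has
`f_k = (1/(k·(-2)^{k-1})) ∑_{q=0}^{⌊k/2⌋} (-1)^q C(k,2q) t^{k-2q} u^q`. -/
theorem fk_tu_explicit (k : ℕ) (hk : 1 ≤ k) :
    PowerSeries.coeff (R := Rtu) k
        (logOne (PowerSeries.C (R := Rtu) t * PowerSeries.X
          + PowerSeries.C (R := Rtu) sPoly * PowerSeries.X ^ 2))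
      = MvPolynomial.C (1 / ((k : ℚ) * (-2 : ℚ) ^ (k - 1))) *
          ∑ q ∈ Finset.range (k / 2 + 1),
            (-1 : Rtu) ^ q * (k.choose (2 * q) : Rtu) * t ^ (k - 2 * q) * u ^ q := by
  exact fk_tu_explicit' k hk
end
end

section
/- Define p_k ∈ ℚ[t,u] by the formal power series expansion 1/(1 + t·x + ((u+t²)/4)·x²) = ∑_{k≥0} p_k(t,u)·x^k. Then p_k = ((-1)^k / 2^k) · ∑_{q=0}^{⌊k/2⌋} (-1)^q · C(k+1, 2q+1) · t^{k-2q} · u^q. -/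
noncomputable section

/-- `1 + t·x + ((u+t²)/4)·x²` in `ℚ[t,u][[x]]`. -/
def Qtu : PowerSeries Rtu :=
  1 + PowerSeries.C t * PowerSeries.X + PowerSeries.C sPoly * PowerSeries.X ^ 2


lemma choose_id (k m : ℕ) :
    (k + 3).choose (m + 2) + (k + 1).choose (m + 2)
      = 2 * (k + 2).choose (m + 2) + (k + 1).choose m := by
  have h1 : (k + 3).choose (m + 2) = (k+2).choose (m+1) + (k+2).choose (m+2) :=
    Nat.choose_succ_succ _ _
  have h2 : (k + 2).choose (m + 2) = (k+1).choose (m+1) + (k+1).choose (m+2) :=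
    Nat.choose_succ_succ _ _
  have h3 : (k + 2).choose (m + 1) = (k+1).choose m + (k+1).choose (m+1) :=
    Nat.choose_succ_succ _ _
  omega

def aa (k : ℕ) : Rtu := ∑ q ∈ Finset.range (k / 2 + 1),
  (-1 : Rtu) ^ q * ((k + 1).choose (2 * q + 1) : Rtu) * t ^ (k - 2 * q) * u ^ q

lemma aa_ext (k N : ℕ) (h : k / 2 + 1 ≤ N) :
    aa k = ∑ q ∈ Finset.range N,
      (-1 : Rtu) ^ q * ((k + 1).choose (2 * q + 1) : Rtu) * t ^ (k - 2 * q) * u ^ q := by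
  unfold aa
  apply Finset.sum_subset (Finset.range_subset_range.2 h)
  intro q _ hq
  simp only [Finset.mem_range, not_lt] at hq
  rw [Nat.choose_eq_zero_of_lt (by omega)]
  simp

lemma aa_rec (k : ℕ) : aa (k + 2) + (u + t ^ 2) * aa k = 2 * t * aa (k + 1) := by
  have e1 : aa (k + 2) = ∑ q ∈ Finset.range (k + 3),
      (-1 : Rtu) ^ q * ((k + 3).choose (2 * q + 1) : Rtu) * t ^ (k + 2 - 2 * q) * u ^ q :=
    aa_ext (k + 2) (k + 3) (by omega)
  have e4 : 2 * t * aa (k + 1) = ∑ q ∈ Finset.range (k + 3),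
      2 * t * ((-1 : Rtu) ^ q * ((k + 2).choose (2 * q + 1) : Rtu) * t ^ (k + 1 - 2 * q) * u ^ q) := by
    rw [aa_ext (k + 1) (k + 3) (by omega), Finset.mul_sum]
  have e3 : t ^ 2 * aa k = ∑ q ∈ Finset.range (k + 3),
      t ^ 2 * ((-1 : Rtu) ^ q * ((k + 1).choose (2 * q + 1) : Rtu) * t ^ (k - 2 * q) * u ^ q) := by
    rw [aa_ext k (k + 3) (by omega), Finset.mul_sum]
  have e2 : u * aa k = (∑ q ∈ Finset.range (k + 3),
      -((-1 : Rtu) ^ q * ((k + 1).choose (2 * q - 1) : Rtu) * t ^ (k + 2 - 2 * q) * u ^ q))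
      + t ^ (k + 2) := by
    rw [aa_ext k (k + 2) (by omega), Finset.mul_sum]
    rw [Finset.sum_range_succ'
      (fun q => -((-1 : Rtu) ^ q * ((k + 1).choose (2 * q - 1) : Rtu) * t ^ (k + 2 - 2 * q) * u ^ q))
      (k + 2)]
    norm_num
    rw [← Finset.sum_neg_distrib]
    apply Finset.sum_congr rfl
    intro q _
    rw [show 2 * (q + 1) - 1 = 2 * q + 1 by omega, show k + 2 - 2 * (q + 1) = k - 2 * q by omega]
    ring
  have hsplit : ∑ q ∈ Finset.range (k + 3),
      ((-1 : Rtu) ^ q * ((k + 3).choose (2 * q + 1) : Rtu) * t ^ (k + 2 - 2 * q) * u ^ q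
        + -((-1 : Rtu) ^ q * ((k + 1).choose (2 * q - 1) : Rtu) * t ^ (k + 2 - 2 * q) * u ^ q)
        + t ^ 2 * ((-1 : Rtu) ^ q * ((k + 1).choose (2 * q + 1) : Rtu) * t ^ (k - 2 * q) * u ^ q)
        - 2 * t * ((-1 : Rtu) ^ q * ((k + 2).choose (2 * q + 1) : Rtu) * t ^ (k + 1 - 2 * q) * u ^ q))
      = (∑ q ∈ Finset.range (k + 3),
          (-1 : Rtu) ^ q * ((k + 3).choose (2 * q + 1) : Rtu) * t ^ (k + 2 - 2 * q) * u ^ q)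
        + (∑ q ∈ Finset.range (k + 3),
          -((-1 : Rtu) ^ q * ((k + 1).choose (2 * q - 1) : Rtu) * t ^ (k + 2 - 2 * q) * u ^ q))
        + (∑ q ∈ Finset.range (k + 3),
          t ^ 2 * ((-1 : Rtu) ^ q * ((k + 1).choose (2 * q + 1) : Rtu) * t ^ (k - 2 * q) * u ^ q))
        - (∑ q ∈ Finset.range (k + 3),
          2 * t * ((-1 : Rtu) ^ q * ((k + 2).choose (2 * q + 1) : Rtu) * t ^ (k + 1 - 2 * q) * u ^ q)) := by
    rw [Finset.sum_sub_distrib, Finset.sum_add_distrib, Finset.sum_add_distrib]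
  have key : ∑ q ∈ Finset.range (k + 3),
      ((-1 : Rtu) ^ q * ((k + 3).choose (2 * q + 1) : Rtu) * t ^ (k + 2 - 2 * q) * u ^ q
        + -((-1 : Rtu) ^ q * ((k + 1).choose (2 * q - 1) : Rtu) * t ^ (k + 2 - 2 * q) * u ^ q)
        + t ^ 2 * ((-1 : Rtu) ^ q * ((k + 1).choose (2 * q + 1) : Rtu) * t ^ (k - 2 * q) * u ^ q)
        - 2 * t * ((-1 : Rtu) ^ q * ((k + 2).choose (2 * q + 1) : Rtu) * t ^ (k + 1 - 2 * q) * u ^ q))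
      = -t ^ (k + 2) := by
    rw [Finset.sum_eq_single_of_mem 0 (Finset.mem_range.2 (by omega))]
    · simp only [pow_zero, mul_one, one_mul, Nat.mul_zero, Nat.zero_add, zero_add, Nat.sub_zero, Nat.zero_sub,
        Nat.choose_one_right, Nat.choose_zero_right, Nat.cast_one]
      push_cast
      ring
    · intro q _ hq
      obtain ⟨m, rfl⟩ : ∃ m, q = m + 1 := ⟨q - 1, by omega⟩
      simp only [show 2 * (m + 1) + 1 = 2 * m + 1 + 2 by ring, show 2 * (m + 1) - 1 = 2 * m + 1 by omega]
      rcases Nat.lt_or_ge k (2 * (m + 1)) with hk | hk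
      · rcases Nat.lt_or_ge (k + 2) (2 * (m + 1)) with hk2 | hk2
        · -- all four binomials vanish
          rw [Nat.choose_eq_zero_of_lt (show k + 3 < 2 * m + 1 + 2 by omega),
            Nat.choose_eq_zero_of_lt (show k + 1 < 2 * m + 1 + 2 by omega),
            Nat.choose_eq_zero_of_lt (show k + 2 < 2 * m + 1 + 2 by omega),
            Nat.choose_eq_zero_of_lt (show k + 1 < 2 * m + 1 by omega)]
          push_cast
          ring
        · rcases Nat.lt_or_ge (k + 1) (2 * (m + 1)) with hk1 | hk1
          · -- k + 2 = 2 * (m + 1), i.e. k = 2 * m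
            obtain rfl : k = 2 * m := by omega
            rw [show 2 * m + 2 - 2 * (m + 1) = 0 by omega, show 2 * m - 2 * (m + 1) = 0 by omega,
              show 2 * m + 1 - 2 * (m + 1) = 0 by omega,
              show (2 * m + 3).choose (2 * m + 1 + 2) = 1 by rw [show 2 * m + 1 + 2 = 2 * m + 3 by ring, Nat.choose_self],
              show (2 * m + 1).choose (2 * m + 1) = 1 from Nat.choose_self _,
              Nat.choose_eq_zero_of_lt (show 2 * m + 1 < 2 * m + 1 + 2 by omega),
              Nat.choose_eq_zero_of_lt (show 2 * m + 2 < 2 * m + 1 + 2 by omega)]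
            push_cast
            ring
          · -- k + 1 = 2 * (m + 1), i.e. k = 2 * m + 1
            obtain rfl : k = 2 * m + 1 := by omega
            have hc : (((2 * m + 1) + 3).choose (2 * m + 1 + 2) : Rtu)
                + (((2 * m + 1) + 1).choose (2 * m + 1 + 2) : Rtu)
                = 2 * (((2 * m + 1) + 2).choose (2 * m + 1 + 2) : Rtu)
                  + (((2 * m + 1) + 1).choose (2 * m + 1) : Rtu) := by
              exact_mod_cast congrArg (Nat.cast : ℕ → Rtu) (choose_id (2 * m + 1) (2 * m + 1))
            have hz : (((2 * m + 1) + 1).choose (2 * m + 1 + 2) : Rtu) = 0 := by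
              rw [Nat.choose_eq_zero_of_lt (by omega)]; exact Nat.cast_zero
            rw [show 2 * m + 1 + 2 - 2 * (m + 1) = 1 by omega,
              show 2 * m + 1 - 2 * (m + 1) = 0 by omega,
              show 2 * m + 1 + 1 - 2 * (m + 1) = 0 by omega]
            linear_combination ((-1 : Rtu) ^ (m + 1) * t * u ^ (m + 1)) * hc
              + ((t ^ 2 - t) * (-1 : Rtu) ^ (m + 1) * u ^ (m + 1)) * hz
      · -- 2 * (m + 1) ≤ k
        obtain ⟨d, rfl⟩ : ∃ d, k = 2 * (m + 1) + d := ⟨k - 2 * (m + 1), by omega⟩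
        have hc : ((2 * (m + 1) + d + 3).choose (2 * m + 1 + 2) : Rtu)
            + ((2 * (m + 1) + d + 1).choose (2 * m + 1 + 2) : Rtu)
            = 2 * ((2 * (m + 1) + d + 2).choose (2 * m + 1 + 2) : Rtu)
              + ((2 * (m + 1) + d + 1).choose (2 * m + 1) : Rtu) := by
          exact_mod_cast congrArg (Nat.cast : ℕ → Rtu) (choose_id (2 * (m + 1) + d) (2 * m + 1))
        rw [show 2 * (m + 1) + d + 2 - 2 * (m + 1) = d + 2 by omega,
          show 2 * (m + 1) + d - 2 * (m + 1) = d by omega,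
          show 2 * (m + 1) + d + 1 - 2 * (m + 1) = d + 1 by omega]
        linear_combination ((-1 : Rtu) ^ (m + 1) * t ^ (d + 2) * u ^ (m + 1)) * hc
  linear_combination e1 + e2 + e3 - e4 - hsplit + key
lemma f_rec (k : ℕ) :
    MvPolynomial.C ((-1 : ℚ) ^ (k + 2) / 2 ^ (k + 2)) * aa (k + 2)
      = -(t * (MvPolynomial.C ((-1 : ℚ) ^ (k + 1) / 2 ^ (k + 1)) * aa (k + 1))
          + sPoly * (MvPolynomial.C ((-1 : ℚ) ^ k / 2 ^ k) * aa k)) := by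
  have h := aa_rec k
  have e1 : (MvPolynomial.C ((-1 : ℚ) ^ (k + 1) / 2 ^ (k + 1)) : Rtu)
      = MvPolynomial.C ((-1 : ℚ) ^ (k + 2) / 2 ^ (k + 2)) * MvPolynomial.C (-2 : ℚ) := by
    rw [← MvPolynomial.C_mul]
    congr 1
    rw [pow_succ, pow_succ]
    ring
  have e0 : (MvPolynomial.C ((-1 : ℚ) ^ k / 2 ^ k) : Rtu)
      = MvPolynomial.C ((-1 : ℚ) ^ (k + 2) / 2 ^ (k + 2)) * MvPolynomial.C (4 : ℚ) := by
    rw [← MvPolynomial.C_mul]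
    congr 1
    rw [pow_succ, pow_succ, pow_succ, pow_succ]
    ring
  have e2 : (MvPolynomial.C (4 : ℚ) : Rtu) * MvPolynomial.C ((4 : ℚ)⁻¹) = 1 := by
    rw [← MvPolynomial.C_mul]
    norm_num
  have e3 : (MvPolynomial.C (-2 : ℚ) : Rtu) = -2 := by
    simp [map_ofNat]
  rw [sPoly, e1, e0, e3]
  linear_combination (MvPolynomial.C ((-1 : ℚ) ^ (k + 2) / 2 ^ (k + 2))) * h
    + ((u + t ^ 2) * aa k * MvPolynomial.C ((-1 : ℚ) ^ (k + 2) / 2 ^ (k + 2))) * e2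

lemma f0 : MvPolynomial.C ((-1 : ℚ) ^ 0 / 2 ^ 0) * aa 0 = 1 := by
  simp [aa]

lemma f1 : MvPolynomial.C ((-1 : ℚ) ^ 1 / 2 ^ 1) * aa 1 = -t := by
  have h2 : aa 1 = 2 * t := by
    simp [aa]
  have e3 : ((2 : Rtu)) = MvPolynomial.C (2 : ℚ) := (map_ofNat MvPolynomial.C 2).symm
  rw [h2, e3, ← mul_assoc, ← MvPolynomial.C_mul]
  norm_num

/-- If `P = 1/(1 + t·x + ((u+t²)/4)·x²)` with coefficients `p_k`, then
`p_k = ((-1)^k/2^k) ∑_{q=0}^{⌊k/2⌋} (-1)^q C(k+1,2q+1) t^{k-2q} u^q`. -/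
theorem pk_tu_explicit (P : PowerSeries Rtu) (hP : Qtu * P = 1) (k : ℕ) :
    PowerSeries.coeff k P
      = MvPolynomial.C ((-1 : ℚ) ^ k / 2 ^ k) *
          ∑ q ∈ Finset.range (k / 2 + 1),
            (-1 : Rtu) ^ q * ((k + 1).choose (2 * q + 1) : Rtu)
              * t ^ (k - 2 * q) * u ^ q := by
  have hc0 : PowerSeries.coeff 0 P = 1 := by
    have h := congrArg (PowerSeries.constantCoeff) hP
    simp [Qtu, map_add, map_mul, sPoly] at h
    simpa [PowerSeries.coeff_zero_eq_constantCoeff] using h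
  have hexp : ∀ n : ℕ, PowerSeries.coeff n (Qtu * P)
      = PowerSeries.coeff n P
        + t * (if 1 ≤ n then PowerSeries.coeff (n - 1) P else 0)
        + sPoly * (if 2 ≤ n then PowerSeries.coeff (n - 2) P else 0) := by
    intro n
    rw [Qtu, add_mul, add_mul, one_mul, map_add, map_add, mul_assoc, mul_assoc,
      PowerSeries.coeff_C_mul, PowerSeries.coeff_C_mul, PowerSeries.coeff_X_pow_mul',
      show (PowerSeries.X : PowerSeries Rtu) * P = PowerSeries.X ^ 1 * P by rw [pow_one],
      PowerSeries.coeff_X_pow_mul']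
  have hc1 : PowerSeries.coeff 1 P = -t := by
    have h := hexp 1
    rw [hP] at h
    simp [PowerSeries.coeff_one, hc0] at h
    linear_combination -h
  have hrec : ∀ n : ℕ, PowerSeries.coeff (n + 2) P
      = -(t * PowerSeries.coeff (n + 1) P + sPoly * PowerSeries.coeff n P) := by
    intro n
    have h := hexp (n + 2)
    rw [hP] at h
    rw [if_pos (by omega), if_pos (by omega), show n + 2 - 1 = n + 1 by omega,
      show n + 2 - 2 = n by omega] at h
    simp [PowerSeries.coeff_one] at h
    linear_combination -h
  have key : ∀ n : ℕ, PowerSeries.coeff n P = MvPolynomial.C ((-1 : ℚ) ^ n / 2 ^ n) * aa n := by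
    intro n
    induction n using Nat.strong_induction_on with
    | _ n ih =>
      match n with
      | 0 => rw [hc0, f0]
      | 1 => rw [hc1, f1]
      | (m + 2) =>
        rw [hrec m, ih (m + 1) (by omega), ih m (by omega)]
        exact (f_rec m).symm
  exact key k
end
end

section
/- Define q_k ∈ ℚ[t,u] by the formal power series expansion -1/(1 + t·x + ((u+t²)/4)·x²)² = ∑_{k≥0} q_k(t,u)·x^k. Then q_k = ((-1)^{k+1} / 2^k) · ∑_{q=0}^{⌊k/2⌋} (-1)^q · (q+1) · C(k+3, 2q+3) · t^{k-2q} · u^q. -/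
noncomputable section

namespace QkAux

open Finset

def cz (m q : ℕ) : ℤ := (-1)^q * (q+1) * ((m+3).choose (2*q+3))
def shift (c : ℕ → ℤ) : ℕ → ℤ := fun q => match q with | 0 => 0 | q+1 => c q

/-- normal form sum -/
def NF (m K : ℕ) (c : ℕ → ℤ) : Rtu := ∑ q ∈ range K, (c q : Rtu) * t^(m-2*q) * u^q

def S (k : ℕ) : Rtu :=
  ∑ q ∈ Finset.range (k / 2 + 1),
    (-1 : Rtu) ^ q * ((q + 1 : ℕ) : Rtu) * ((k + 3).choose (2 * q + 3) : Rtu)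
      * t ^ (k - 2 * q) * u ^ q

lemma S_eq_nf (m : ℕ) : S m = NF m (m/2+1) (cz m) := by
  refine Finset.sum_congr rfl fun q _ => ?_
  simp only [cz]
  push_cast
  ring

lemma cz_vanish (m q : ℕ) (h : m < 2*q) : cz m q = 0 := by
  have : (m + 3).choose (2*q+3) = 0 := Nat.choose_eq_zero_of_lt (by omega)
  simp [cz, this]

lemma nf_extend (m K K' : ℕ) (c : ℕ → ℤ) (hK : K ≤ K') (hc : ∀ q, K ≤ q → c q = 0) :
    NF m K c = NF m K' c := by
  refine (Finset.sum_subset (Finset.range_subset_range.2 hK) fun q _ hq => ?_)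
  rw [hc q (by simpa using hq)]; simp

lemma nf_mul_t (m K : ℕ) (c : ℕ → ℤ) (hc : ∀ q, m < 2*q → c q = 0) :
    t * NF m K c = NF (m+1) K c := by
  rw [NF, NF, Finset.mul_sum]
  refine Finset.sum_congr rfl fun q _ => ?_
  by_cases h : m < 2*q
  · rw [hc q h]; simp
  · rw [show m+1-2*q = (m-2*q)+1 from by omega]
    ring

lemma nf_mul_u (m K : ℕ) (c : ℕ → ℤ) :
    u * NF m K c = NF (m+2) (K+1) (shift c) := by
  rw [NF, NF, Finset.mul_sum, Finset.sum_range_succ']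
  simp only [shift, Int.cast_zero, zero_mul, add_zero]
  refine Finset.sum_congr rfl fun q _ => ?_
  rw [show m+2-2*(q+1) = m - 2*q from by omega]
  ring

lemma nf_smul (z : ℤ) (m K : ℕ) (c : ℕ → ℤ) :
    (z:Rtu) * NF m K c = NF m K (fun q => z * c q) := by
  rw [NF, NF, Finset.mul_sum]
  refine Finset.sum_congr rfl fun q _ => ?_
  push_cast; ring

lemma nf_add (m K : ℕ) (c c' : ℕ → ℤ) :
    NF m K c + NF m K c' = NF m K (fun q => c q + c' q) := by
  rw [NF, NF, NF, ← Finset.sum_add_distrib]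
  refine Finset.sum_congr rfl fun q _ => ?_
  push_cast; ring

lemma nf_congr (m K : ℕ) (c c' : ℕ → ℤ) (h : ∀ q, c q = c' q) : NF m K c = NF m K c' := by
  refine Finset.sum_congr rfl fun q _ => ?_
  rw [h]

lemma nf_tpow (a m K : ℕ) (c : ℕ → ℤ) (hc : ∀ q, m < 2*q → c q = 0) :
    t^a * NF m K c = NF (m+a) K c := by
  induction a with
  | zero => simp
  | succ a ih =>
    rw [pow_succ, mul_comm (t^a) t, mul_assoc, ih, nf_mul_t (m+a) K c
      (fun q h => hc q (by omega))]
    rfl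

lemma nf_upow (b m K : ℕ) (c : ℕ → ℤ) :
    u^b * NF m K c = NF (m+2*b) (K+b) (shift^[b] c) := by
  induction b with
  | zero => simp
  | succ b ih =>
    rw [pow_succ, mul_comm (u^b) u, mul_assoc, ih, nf_mul_u,
      show m+2*b+2 = m+2*(b+1) from by omega, Function.iterate_succ',
      Function.comp_apply, show K+(b+1) = K+b+1 from rfl]

lemma shift_iter_vanish (b : ℕ) (c : ℕ → ℤ) (m : ℕ) (h : ∀ j, m < 2*j → c j = 0) :
    ∀ q, m + 2*b < 2*q → shift^[b] c q = 0 := by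
  induction b generalizing c m with
  | zero => intro q hq; exact h q (by omega)
  | succ b ih =>
    intro q hq
    rw [Function.iterate_succ_apply]
    refine ih (shift c) (m+2) (fun j hj => ?_) q (by omega)
    match j with
    | 0 => rfl
    | j+1 => exact h j (by omega)

lemma prod_form (z : ℤ) (a b m M K : ℕ) (hM : m + 2*b + a = M) (hK : m/2+1+b ≤ K) :
    (z:Rtu) * (t^a * (u^b * S m)) = NF M K (fun q => z * shift^[b] (cz m) q) := by
  subst hM
  rw [S_eq_nf m, nf_upow, nf_tpow a (m+2*b) _ _
      (fun q h => shift_iter_vanish b (cz m) m (fun j hj => cz_vanish m j hj) q h),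
    nf_smul]
  exact nf_extend _ _ K _ (by omega)
    (fun q hq => by
      rw [shift_iter_vanish b (cz m) m (fun j hj => cz_vanish m j hj) q (by omega), mul_zero])

lemma key_int (n q : ℕ) :
    cz (n+4) q = 4 * cz (n+3) q - (2 * shift (cz (n+2)) q + 6 * cz (n+2) q)
    + (4 * shift (cz (n+1)) q + 4 * cz (n+1) q)
    - (shift (shift (cz n)) q + 2 * shift (cz n) q + cz n q) := by
  match q with
  | 0 =>
    simp only [cz, shift]
    simp only [Nat.choose_succ_succ, Nat.choose_zero_right]
    push_cast
    ring
  | 1 =>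
    simp only [cz, shift]
    simp only [Nat.choose_succ_succ, Nat.choose_zero_right]
    push_cast
    ring
  | (q+2) =>
    simp only [cz, shift]
    simp only [show ∀ m, 2*(m+1)+1 = 2*m+3 from fun m => by omega,
      show ∀ m, 2*(m+2)+3 = 2*m+3+4 from fun m => by omega,
      show ∀ m, 2*(m+1)+3 = 2*m+3+2 from fun m => by omega,
      show 2*q+1 = 2*q+0+1 from rfl]
    simp only [Nat.choose_succ_succ]
    push_cast
    ring

lemma keyS (n : ℕ) : S (n+4) =
    ((4:ℤ):Rtu) * (t^1 * (u^0 * S (n+3)))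
    + ((-2:ℤ):Rtu) * (t^0 * (u^1 * S (n+2)))
    + ((-6:ℤ):Rtu) * (t^2 * (u^0 * S (n+2)))
    + ((4:ℤ):Rtu) * (t^1 * (u^1 * S (n+1)))
    + ((4:ℤ):Rtu) * (t^3 * (u^0 * S (n+1)))
    + ((-1:ℤ):Rtu) * (t^0 * (u^2 * S n))
    + ((-2:ℤ):Rtu) * (t^2 * (u^1 * S n))
    + ((-1:ℤ):Rtu) * (t^4 * (u^0 * S n)) := by
  have h0 : S (n+4) = ((1:ℤ):Rtu) * (t^0 * (u^0 * S (n+4))) := by push_cast; ring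
  rw [h0]
  rw [prod_form 1 0 0 (n+4) (n+4) (n/2+4) (by omega) (by omega),
    prod_form 4 1 0 (n+3) (n+4) (n/2+4) (by omega) (by omega),
    prod_form (-2) 0 1 (n+2) (n+4) (n/2+4) (by omega) (by omega),
    prod_form (-6) 2 0 (n+2) (n+4) (n/2+4) (by omega) (by omega),
    prod_form 4 1 1 (n+1) (n+4) (n/2+4) (by omega) (by omega),
    prod_form 4 3 0 (n+1) (n+4) (n/2+4) (by omega) (by omega),
    prod_form (-1) 0 2 n (n+4) (n/2+4) (by omega) (by omega),
    prod_form (-2) 2 1 n (n+4) (n/2+4) (by omega) (by omega),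
    prod_form (-1) 4 0 n (n+4) (n/2+4) (by omega) (by omega)]
  simp only [nf_add]
  refine nf_congr _ _ _ _ fun q => ?_
  have := key_int n q
  simp only [Function.iterate_succ, Function.iterate_zero, Function.comp_apply, id_eq] at *
  linarith

def pp (k : ℕ) : Rtu := MvPolynomial.C ((-1 : ℚ) ^ (k + 1) / 2 ^ k) * S k

lemma hS0 : S 0 = 1 := by norm_num [S]
lemma hS1 : S 1 = 4*t := by norm_num [S]
lemma hS2 : S 2 = 10*t^2 - 2*u := by
  norm_num [S, Finset.sum_range_succ, show Nat.choose 5 3 = 10 from rfl]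
  ring
lemma hS3 : S 3 = 20*t^3 - 12*(t*u) := by
  norm_num [S, Finset.sum_range_succ, show Nat.choose 6 3 = 20 from rfl]
  ring

lemma hsu : u = (4:Rtu) * sPoly - t^2 := by
  rw [sPoly, show (4:Rtu) = MvPolynomial.C (4:ℚ) from (map_ofNat _ _).symm, ← mul_assoc,
    ← map_mul]
  norm_num

lemma hQ2P (P : PowerSeries Rtu) : Qtu^2 * P =
    P + PowerSeries.C (2*t) * (P * PowerSeries.X ^ 1)
    + PowerSeries.C (2*sPoly + t^2) * (P * PowerSeries.X ^ 2)
    + PowerSeries.C (2*(t*sPoly)) * (P * PowerSeries.X ^ 3)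
    + PowerSeries.C (sPoly^2) * (P * PowerSeries.X ^ 4) := by
  rw [Qtu]
  simp only [map_mul, map_add, map_pow, map_ofNat]
  ring

lemma coeff_gen (a b c d : Rtu) (P P' : PowerSeries Rtu) (n : ℕ) :
    PowerSeries.coeff n (P + PowerSeries.C a * (P' * PowerSeries.X ^ 1)
      + PowerSeries.C b * (P' * PowerSeries.X ^ 2)
      + PowerSeries.C c * (P' * PowerSeries.X ^ 3)
      + PowerSeries.C d * (P' * PowerSeries.X ^ 4))
    = PowerSeries.coeff n P
      + a * (if 1 ≤ n then PowerSeries.coeff (n-1) P' else 0)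
      + b * (if 2 ≤ n then PowerSeries.coeff (n-2) P' else 0)
      + c * (if 3 ≤ n then PowerSeries.coeff (n-3) P' else 0)
      + d * (if 4 ≤ n then PowerSeries.coeff (n-4) P' else 0) := by
  simp only [map_add, PowerSeries.coeff_C_mul, PowerSeries.coeff_mul_X_pow']

lemma coeff_eq (n : ℕ) : PowerSeries.coeff n (Qtu^2 * PowerSeries.mk pp) =
    pp n + 2*t * (if 1 ≤ n then pp (n-1) else 0)
    + (2*sPoly + t^2) * (if 2 ≤ n then pp (n-2) else 0)
    + 2*(t*sPoly) * (if 3 ≤ n then pp (n-3) else 0)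
    + sPoly^2 * (if 4 ≤ n then pp (n-4) else 0) := by
  rw [hQ2P, coeff_gen]
  simp only [PowerSeries.coeff_mk]

lemma Cfact (a : ℚ) (b : ℚ) (c : Rtu) (h1 : MvPolynomial.C b = c) (h2 : a = b) :
    (MvPolynomial.C a : Rtu) = c := by rw [h2, h1]

lemma hmain : Qtu^2 * PowerSeries.mk pp = -1 := by
  refine PowerSeries.ext fun n => ?_
  rw [coeff_eq]
  rw [show ((-1 : PowerSeries Rtu)) = -(1 : PowerSeries Rtu) from rfl, map_neg,
    PowerSeries.coeff_one]
  have hA : MvPolynomial.C (-1:ℚ) = (-1:Rtu) := by simp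
  have f1 : MvPolynomial.C ((1:ℚ)/2) * (4:Rtu) = 2 := by
    rw [show (4:Rtu) = MvPolynomial.C (4:ℚ) from (map_ofNat _ _).symm, ← map_mul]
    exact Cfact _ 2 _ (map_ofNat _ _) (by norm_num)
  have f2 : MvPolynomial.C (-(1:ℚ)/4) * (12:Rtu) = -3 := by
    rw [show (12:Rtu) = MvPolynomial.C (12:ℚ) from (map_ofNat _ _).symm, ← map_mul]
    exact Cfact _ (-3) _ (by rw [map_neg]; norm_num [map_ofNat]) (by norm_num)
  have f3 : MvPolynomial.C (-(1:ℚ)/4) * (8:Rtu) = -2 := by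
    rw [show (8:Rtu) = MvPolynomial.C (8:ℚ) from (map_ofNat _ _).symm, ← map_mul]
    exact Cfact _ (-2) _ (by rw [map_neg]; norm_num [map_ofNat]) (by norm_num)
  have f4 : MvPolynomial.C ((1:ℚ)/8) * (32:Rtu) = 4 := by
    rw [show (32:Rtu) = MvPolynomial.C (32:ℚ) from (map_ofNat _ _).symm, ← map_mul]
    exact Cfact _ 4 _ (map_ofNat _ _) (by norm_num)
  have f5 : MvPolynomial.C ((1:ℚ)/8) * (48:Rtu) = 6 := by
    rw [show (48:Rtu) = MvPolynomial.C (48:ℚ) from (map_ofNat _ _).symm, ← map_mul]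
    exact Cfact _ 6 _ (map_ofNat _ _) (by norm_num)
  have g8 : MvPolynomial.C ((1:ℚ)/4) * (8:Rtu) = 2 := by
    rw [show (8:Rtu) = MvPolynomial.C (8:ℚ) from (map_ofNat _ _).symm, ← map_mul]
    exact Cfact _ 2 _ (map_ofNat _ _) (by norm_num)
  have g12 : MvPolynomial.C ((1:ℚ)/4) * (12:Rtu) = 3 := by
    rw [show (12:Rtu) = MvPolynomial.C (12:ℚ) from (map_ofNat _ _).symm, ← map_mul]
    exact Cfact _ 3 _ (map_ofNat _ _) (by norm_num)
  have g16 : MvPolynomial.C ((1:ℚ)/4) * (16:Rtu) = 4 := by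
    rw [show (16:Rtu) = MvPolynomial.C (16:ℚ) from (map_ofNat _ _).symm, ← map_mul]
    exact Cfact _ 4 _ (map_ofNat _ _) (by norm_num)
  have g24 : MvPolynomial.C ((1:ℚ)/4) * (24:Rtu) = 6 := by
    rw [show (24:Rtu) = MvPolynomial.C (24:ℚ) from (map_ofNat _ _).symm, ← map_mul]
    exact Cfact _ 6 _ (map_ofNat _ _) (by norm_num)
  match n with
  | 0 =>
    norm_num [pp, hS0]
  | 1 =>
    norm_num [pp, hS0, hS1]
    linear_combination t * f1
  | 2 =>
    norm_num [pp, hS0, hS1, hS2]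
    rw [hsu]
    linear_combination -t^2*g12 + sPoly*g8 + 2*t*t*f1
  | 3 =>
    norm_num [pp, hS0, hS1, hS2, hS3]
    rw [hsu]
    linear_combination t^3*f4 - t*sPoly*f5 - t^3*g24 + t*sPoly*g16 + (2*sPoly+t^2)*t*f1
  | (n+4) =>
    norm_num
    have g3 : (MvPolynomial.C ((-1:ℚ)^(n+3+1)/2^(n+3)) : Rtu)
        = (-2) * MvPolynomial.C ((-1:ℚ)^(n+4+1)/2^(n+4)) := by
      rw [show ((-1:ℚ)^(n+3+1)/2^(n+3)) = -2 * ((-1)^(n+4+1)/2^(n+4)) from by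
        field_simp
        ring]
      simp [map_mul, map_ofNat]
    have g2 : (MvPolynomial.C ((-1:ℚ)^(n+2+1)/2^(n+2)) : Rtu)
        = (4:Rtu) * MvPolynomial.C ((-1:ℚ)^(n+4+1)/2^(n+4)) := by
      rw [show ((-1:ℚ)^(n+2+1)/2^(n+2)) = 4 * ((-1)^(n+4+1)/2^(n+4)) from by
        field_simp
        ring]
      simp [map_mul, map_ofNat]
    have g1 : (MvPolynomial.C ((-1:ℚ)^(n+1+1)/2^(n+1)) : Rtu)
        = (-8) * MvPolynomial.C ((-1:ℚ)^(n+4+1)/2^(n+4)) := by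
      rw [show ((-1:ℚ)^(n+1+1)/2^(n+1)) = -8 * ((-1)^(n+4+1)/2^(n+4)) from by
        field_simp
        ring]
      simp [map_mul, map_ofNat]
    have g0 : (MvPolynomial.C ((-1:ℚ)^(n+1)/2^n) : Rtu)
        = (16:Rtu) * MvPolynomial.C ((-1:ℚ)^(n+4+1)/2^(n+4)) := by
      rw [show ((-1:ℚ)^(n+1)/2^n) = 16 * ((-1)^(n+4+1)/2^(n+4)) from by
        field_simp
        ring]
      simp [map_mul, map_ofNat]
    simp only [show n+4-1 = n+3 from rfl, show n+4-2 = n+2 from rfl,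
      show n+4-3 = n+1 from rfl, show n+4-4 = n from rfl]
    rw [pp, pp, pp, pp, pp, g3, g2, g1, g0, keyS n, hsu]
    push_cast
    ring

end QkAux

/-- If `N = -1/(1 + t·x + ((u+t²)/4)·x²)²`, i.e. `Qtu² · N = -1`, with coefficients
`q_k`, then `q_k = ((-1)^{k+1}/2^k) ∑_{q=0}^{⌊k/2⌋} (-1)^q (q+1) C(k+3,2q+3) t^{k-2q} u^q`. -/
theorem qk_tu_explicit (N : PowerSeries Rtu) (hN : Qtu ^ 2 * N = -1) (k : ℕ) :
    PowerSeries.coeff k N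
      = MvPolynomial.C ((-1 : ℚ) ^ (k + 1) / 2 ^ k) *
          ∑ q ∈ Finset.range (k / 2 + 1),
            (-1 : Rtu) ^ q * ((q + 1 : ℕ) : Rtu) * ((k + 3).choose (2 * q + 3) : Rtu)
              * t ^ (k - 2 * q) * u ^ q := by
  have hQne : (Qtu : PowerSeries Rtu) ≠ 0 := by
    intro h
    have := congrArg (PowerSeries.constantCoeff) h
    simp [Qtu] at this
  have h2 : Qtu ^ 2 ≠ 0 := pow_ne_zero _ hQne
  have hNP : N = PowerSeries.mk QkAux.pp :=
    mul_left_cancel₀ h2 (hN.trans QkAux.hmain.symm)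
  rw [hNP, PowerSeries.coeff_mk]
  rfl
end
end
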